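/- Let n ≥ 3 and let α₁, …, αₙ ∈ ℤ² with α₁ = (1,0) and αᵢ = (aᵢ, bᵢ), such that aᵢ·bᵢ₊₁ − aᵢ₊₁·bᵢ = ±1 for i = 1, …, n−1. Let k₊ be the number of indices i ∈ {1,…,n−1} with bᵢ ≠ 0, bᵢ₊₁ ≠ 0, and aᵢ/bᵢ < aᵢ₊₁/bᵢ₊₁ as rational numbers, and let k₋ be the number of such indices with aᵢ/bᵢ > aᵢ₊₁/bᵢ₊₁. Then the sum over i = 2, …, n−1 of the signatures of the Maslov matrices θ(α₁, αᵢ, αᵢ₊₁) (with the αᵢ regarded as vectors in ℝ²) equals k₊ − k₋. -/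

import Mathlib

open Matrix

/-- The standard symplectic form on `ℝ²`. -/
def omegaForm (u v : ℝ × ℝ) : ℝ := u.1 * v.2 - u.2 * v.1

/-- The signature of a real `3 × 3` matrix: the number of positive eigenvalues minus
the number of negative eigenvalues (defined to be `0` if the matrix is not symmetric). -/
noncomputable def matSignature (A : Matrix (Fin 3) (Fin 3) ℝ) : ℤ :=
  if h : A.IsHermitian then
    ((Finset.univ.filter (fun i => 0 < h.eigenvalues i)).card : ℤ)
      - ((Finset.univ.filter (fun i => h.eigenvalues i < 0)).card : ℤ)
  else 0

/-- The Maslov matrix `θ(v₁, v₂, v₃)`. -/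
def maslovMatrix (v₁ v₂ v₃ : ℝ × ℝ) : Matrix (Fin 3) (Fin 3) ℝ :=
  !![0, -omegaForm v₁ v₂, omegaForm v₁ v₃;
     -omegaForm v₁ v₂, 0, -omegaForm v₂ v₃;
     omegaForm v₁ v₃, -omegaForm v₂ v₃, 0]

/-- The inclusion `ℤ² → ℝ²`. -/
def toR (v : ℤ × ℤ) : ℝ × ℝ := ((v.1 : ℝ), (v.2 : ℝ))

/- ### Auxiliary lemmas -/

lemma sortedNeg (x y z : ℝ) (hxy : x ≤ y) (hyz : y ≤ z) (hs : x + y + z = 0)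
    (hp : x * y * z < 0) :
    ((if 0 < x then (1:ℤ) else 0) + (if 0 < y then 1 else 0) + (if 0 < z then 1 else 0))
      - ((if x < 0 then (1:ℤ) else 0) + (if y < 0 then 1 else 0) + (if z < 0 then 1 else 0))
      = 1 := by
  have hx : x < 0 := by
    by_contra h
    push_neg at h
    have : 0 ≤ x * y * z := mul_nonneg (mul_nonneg h (h.trans hxy)) ((h.trans hxy).trans hyz)
    linarith
  have hz : 0 < z := by
    by_contra h
    push_neg at h
    linarith
  have hy : 0 < y := by
    rcases lt_trichotomy y 0 with h | h | h
    · exact absurd hp (not_lt.2 (mul_pos (mul_pos_of_neg_of_neg hx h) hz).le)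
    · rw [h, mul_zero, zero_mul] at hp; linarith
    · exact h
  rw [if_neg (asymm hx), if_pos hy, if_pos hz, if_pos hx, if_neg (asymm hy), if_neg (asymm hz)]
  norm_num

lemma sortedPos (x y z : ℝ) (hxy : x ≤ y) (hyz : y ≤ z) (hs : x + y + z = 0)
    (hp : 0 < x * y * z) :
    ((if 0 < x then (1:ℤ) else 0) + (if 0 < y then 1 else 0) + (if 0 < z then 1 else 0))
      - ((if x < 0 then (1:ℤ) else 0) + (if y < 0 then 1 else 0) + (if z < 0 then 1 else 0))
      = -1 := by
  have hz : 0 < z := by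
    by_contra h
    push_neg at h
    have h1 : 0 ≤ (-x) * (-y) := mul_nonneg (by linarith) (by linarith)
    have h2 : (x * y) * z ≤ 0 := mul_nonpos_iff.mpr (Or.inl ⟨by linarith, h⟩)
    linarith
  have hy : y < 0 := by
    by_contra h
    push_neg at h
    have hyz' : 0 ≤ y * z := mul_nonneg h hz.le
    have hx' : x ≤ 0 := by linarith
    have : x * (y * z) ≤ 0 := mul_nonpos_iff.mpr (Or.inr ⟨hx', hyz'⟩)
    linarith
  have hx : x < 0 := hxy.trans_lt hy
  rw [if_neg (asymm hx), if_neg (asymm hy), if_pos hz, if_pos hx, if_pos hy, if_neg (asymm hz)]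
  norm_num

lemma sortedZero (x y z : ℝ) (hxy : x ≤ y) (hyz : y ≤ z) (hs : x + y + z = 0)
    (hp : x * y * z = 0) (hne : ¬(x = 0 ∧ y = 0 ∧ z = 0)) :
    ((if 0 < x then (1:ℤ) else 0) + (if 0 < y then 1 else 0) + (if 0 < z then 1 else 0))
      - ((if x < 0 then (1:ℤ) else 0) + (if y < 0 then 1 else 0) + (if z < 0 then 1 else 0))
      = 0 := by
  have hx : x < 0 := by
    by_contra h
    push_neg at h
    exact hne ⟨by linarith, by linarith, by linarith⟩
  have hz : 0 < z := by
    by_contra h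
    push_neg at h
    exact hne ⟨by linarith, by linarith, by linarith⟩
  have hy : y = 0 := by
    rcases mul_eq_zero.mp hp with h | h
    · rcases mul_eq_zero.mp h with h' | h'
      · exact absurd h' hx.ne
      · exact h'
    · exact absurd h hz.ne'
  rw [if_neg (asymm hx), if_pos hz, if_pos hx, if_neg (asymm hz), hy]
  norm_num

lemma sig3_neg (x y z : ℝ) (hs : x + y + z = 0) (hp : x * y * z < 0) :
    ((if 0 < x then (1:ℤ) else 0) + (if 0 < y then 1 else 0) + (if 0 < z then 1 else 0))
      - ((if x < 0 then (1:ℤ) else 0) + (if y < 0 then 1 else 0) + (if z < 0 then 1 else 0))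
      = 1 := by
  rcases le_total x y with h1 | h1 <;> rcases le_total y z with h2 | h2 <;>
    rcases le_total x z with h3 | h3 <;>
    first
      | linarith [sortedNeg x y z (by linarith) (by linarith) (by linarith) (by linarith)]
      | linarith [sortedNeg x z y (by linarith) (by linarith) (by linarith) (by linarith)]
      | linarith [sortedNeg y x z (by linarith) (by linarith) (by linarith) (by linarith)]
      | linarith [sortedNeg y z x (by linarith) (by linarith) (by linarith) (by linarith)]
      | linarith [sortedNeg z x y (by linarith) (by linarith) (by linarith) (by linarith)]
      | linarith [sortedNeg z y x (by linarith) (by linarith) (by linarith) (by linarith)]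

lemma sig3_pos (x y z : ℝ) (hs : x + y + z = 0) (hp : 0 < x * y * z) :
    ((if 0 < x then (1:ℤ) else 0) + (if 0 < y then 1 else 0) + (if 0 < z then 1 else 0))
      - ((if x < 0 then (1:ℤ) else 0) + (if y < 0 then 1 else 0) + (if z < 0 then 1 else 0))
      = -1 := by
  rcases le_total x y with h1 | h1 <;> rcases le_total y z with h2 | h2 <;>
    rcases le_total x z with h3 | h3 <;>
    first
      | linarith [sortedPos x y z (by linarith) (by linarith) (by linarith) (by linarith)]
      | linarith [sortedPos x z y (by linarith) (by linarith) (by linarith) (by linarith)]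
      | linarith [sortedPos y x z (by linarith) (by linarith) (by linarith) (by linarith)]
      | linarith [sortedPos y z x (by linarith) (by linarith) (by linarith) (by linarith)]
      | linarith [sortedPos z x y (by linarith) (by linarith) (by linarith) (by linarith)]
      | linarith [sortedPos z y x (by linarith) (by linarith) (by linarith) (by linarith)]

lemma sig3_zero (x y z : ℝ) (hs : x + y + z = 0) (hp : x * y * z = 0)
    (hne : ¬(x = 0 ∧ y = 0 ∧ z = 0)) :
    ((if 0 < x then (1:ℤ) else 0) + (if 0 < y then 1 else 0) + (if 0 < z then 1 else 0))
      - ((if x < 0 then (1:ℤ) else 0) + (if y < 0 then 1 else 0) + (if z < 0 then 1 else 0))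
      = 0 := by
  rcases le_total x y with h1 | h1 <;> rcases le_total y z with h2 | h2 <;>
    rcases le_total x z with h3 | h3 <;>
    first
      | linarith [sortedZero x y z (by linarith) (by linarith) (by linarith) (by linarith) (by tauto)]
      | linarith [sortedZero x z y (by linarith) (by linarith) (by linarith) (by linarith) (by tauto)]
      | linarith [sortedZero y x z (by linarith) (by linarith) (by linarith) (by linarith) (by tauto)]
      | linarith [sortedZero y z x (by linarith) (by linarith) (by linarith) (by linarith) (by tauto)]
      | linarith [sortedZero z x y (by linarith) (by linarith) (by linarith) (by linarith) (by tauto)]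
      | linarith [sortedZero z y x (by linarith) (by linarith) (by linarith) (by linarith) (by tauto)]

lemma trace_eq_sum_eigs {m : ℕ} (A : Matrix (Fin m) (Fin m) ℝ) (hA : A.IsHermitian) :
    A.trace = ∑ i, hA.eigenvalues i := by
  conv_lhs => rw [hA.spectral_theorem, Unitary.conjStarAlgAut_apply]
  rw [Matrix.trace_mul_cycle,
    Matrix.mem_unitaryGroup_iff'.mp (hA.eigenvectorUnitary).2, one_mul,
    Matrix.trace_diagonal]
  simp [RCLike.ofReal_real_eq_id]

lemma matSignature_eq (A : Matrix (Fin 3) (Fin 3) ℝ) (hA : A.IsHermitian) :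
    matSignature A =
      ((if 0 < hA.eigenvalues 0 then (1:ℤ) else 0) + (if 0 < hA.eigenvalues 1 then 1 else 0)
          + (if 0 < hA.eigenvalues 2 then 1 else 0))
        - ((if hA.eigenvalues 0 < 0 then (1:ℤ) else 0) + (if hA.eigenvalues 1 < 0 then 1 else 0)
          + (if hA.eigenvalues 2 < 0 then 1 else 0)) := by
  rw [matSignature, dif_pos hA, Finset.natCast_card_filter, Finset.natCast_card_filter,
    Fin.sum_univ_three, Fin.sum_univ_three]

lemma eigs_not_all_zero (A : Matrix (Fin 3) (Fin 3) ℝ) (hA : A.IsHermitian) (hne : A ≠ 0) :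
    ¬(hA.eigenvalues 0 = 0 ∧ hA.eigenvalues 1 = 0 ∧ hA.eigenvalues 2 = 0) := by
  rintro ⟨h0, h1, h2⟩
  apply hne
  have hfun : (RCLike.ofReal ∘ hA.eigenvalues : Fin 3 → ℝ) = fun _ => 0 := by
    funext i
    fin_cases i <;> simp [h0, h1, h2]
  have hsp := hA.spectral_theorem
  rw [hfun] at hsp
  simpa using hsp

lemma sigM (a c e : ℝ) (he : e ≠ 0) :
    matSignature !![(0:ℝ), a, c; a, 0, e; c, e, 0] =
      if a * c * e < 0 then 1 else if 0 < a * c * e then -1 else 0 := by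
  set A : Matrix (Fin 3) (Fin 3) ℝ := !![(0:ℝ), a, c; a, 0, e; c, e, 0] with hAdef
  have hA : A.IsHermitian := by
    show Aᴴ = A
    ext i j
    fin_cases i <;> fin_cases j <;> simp [hAdef, Matrix.conjTranspose_apply]
  have htr : A.trace = 0 := by
    simp [hAdef, Matrix.trace_fin_three]
  have hdet : A.det = 2 * (a * c * e) := by
    simp [hAdef, Matrix.det_fin_three]
    ring
  have hAne : A ≠ 0 := by
    intro h0
    apply he
    have : A 1 2 = e := by simp [hAdef]
    rw [h0] at this
    simpa using this.symm
  have hsum : hA.eigenvalues 0 + hA.eigenvalues 1 + hA.eigenvalues 2 = 0 := by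
    have h := trace_eq_sum_eigs A hA
    rw [htr, Fin.sum_univ_three] at h
    linarith
  have hprod : hA.eigenvalues 0 * hA.eigenvalues 1 * hA.eigenvalues 2 = 2 * (a * c * e) := by
    have h := hA.det_eq_prod_eigenvalues
    rw [hdet, Fin.prod_univ_three] at h
    exact_mod_cast h.symm
  rw [matSignature_eq A hA]
  rcases lt_trichotomy (a * c * e) 0 with h | h | h
  · rw [if_pos h]
    exact sig3_neg _ _ _ hsum (by linarith)
  · rw [if_neg (show ¬(a * c * e < 0) by rw [h]; exact lt_irrefl 0),
      if_neg (show ¬(0 < a * c * e) by rw [h]; exact lt_irrefl 0)]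
    exact sig3_zero _ _ _ hsum (by rw [hprod, h]; ring) (eigs_not_all_zero A hA hAne)
  · rw [if_neg (show ¬(a * c * e < 0) by linarith), if_pos h]
    exact sig3_pos _ _ _ hsum (by linarith)

lemma div_pos_iff_mul (p q : ℚ) : 0 < p / q ↔ 0 < p * q := by
  rw [div_pos_iff, mul_pos_iff]

lemma slopeIff (v w : ℤ × ℤ) (hv : v.2 ≠ 0) (hw : w.2 ≠ 0) :
    ((v.1 : ℚ) / (v.2 : ℚ) < (w.1 : ℚ) / (w.2 : ℚ)) ↔
      v.2 * w.2 * (v.1 * w.2 - w.1 * v.2) < 0 := by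
  have hv' : ((v.2 : ℚ)) ≠ 0 := Int.cast_ne_zero.mpr hv
  have hw' : ((w.2 : ℚ)) ≠ 0 := Int.cast_ne_zero.mpr hw
  rw [← sub_pos, div_sub_div _ _ hw' hv', div_pos_iff_mul]
  rw [show ((w.1 : ℚ) * v.2 - w.2 * v.1) * (w.2 * v.2)
      = ((-(v.2 * w.2 * (v.1 * w.2 - w.1 * v.2)) : ℤ) : ℚ) by push_cast; ring]
  rw [show (0 : ℚ) = ((0 : ℤ) : ℚ) by norm_cast, Int.cast_lt]
  omega

lemma perIndex (v w : ℤ × ℤ)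
    (hd : v.1 * w.2 - w.1 * v.2 = 1 ∨ v.1 * w.2 - w.1 * v.2 = -1) :
    matSignature (maslovMatrix (toR (1, 0)) (toR v) (toR w)) =
      (if v.2 ≠ 0 ∧ w.2 ≠ 0 ∧ (v.1 : ℚ) / (v.2 : ℚ) < (w.1 : ℚ) / (w.2 : ℚ) then (1:ℤ) else 0)
        - (if v.2 ≠ 0 ∧ w.2 ≠ 0 ∧ (w.1 : ℚ) / (w.2 : ℚ) < (v.1 : ℚ) / (v.2 : ℚ) then (1:ℤ) else 0)
    := by
  set d : ℤ := v.1 * w.2 - w.1 * v.2 with hdd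
  have hd0 : d ≠ 0 := by rcases hd with h | h <;> omega
  have h12 : omegaForm (toR (1, 0)) (toR v) = ((v.2 : ℤ) : ℝ) := by
    simp [omegaForm, toR]
  have h13 : omegaForm (toR (1, 0)) (toR w) = ((w.2 : ℤ) : ℝ) := by
    simp [omegaForm, toR]
  have h23 : omegaForm (toR v) (toR w) = ((d : ℤ) : ℝ) := by
    simp only [omegaForm, toR, hdd]
    push_cast
    ring
  simp only [maslovMatrix]
  rw [h12, h13, h23, sigM _ _ _ (by simpa using (Int.cast_ne_zero (α := ℝ)).mpr hd0)]
  rw [show -((v.2 : ℤ) : ℝ) * ((w.2 : ℤ) : ℝ) * -((d : ℤ) : ℝ) = ((v.2 * w.2 * d : ℤ) : ℝ) by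
    push_cast; ring]
  have hP : (v.2 ≠ 0 ∧ w.2 ≠ 0 ∧ (v.1 : ℚ) / (v.2 : ℚ) < (w.1 : ℚ) / (w.2 : ℚ)) ↔
      v.2 * w.2 * d < 0 := by
    constructor
    · rintro ⟨hv, hw, hlt⟩
      exact (slopeIff v w hv hw).mp hlt
    · intro h
      have hv : v.2 ≠ 0 := by intro h0; rw [h0] at h; simp at h
      have hw : w.2 ≠ 0 := by intro h0; rw [h0] at h; simp at h
      exact ⟨hv, hw, (slopeIff v w hv hw).mpr h⟩
  have hQ : (v.2 ≠ 0 ∧ w.2 ≠ 0 ∧ (w.1 : ℚ) / (w.2 : ℚ) < (v.1 : ℚ) / (v.2 : ℚ)) ↔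
      0 < v.2 * w.2 * d := by
    constructor
    · rintro ⟨hv, hw, hlt⟩
      have hk := (slopeIff w v hw hv).mp hlt
      have key : v.2 * w.2 * d = -(w.2 * v.2 * (w.1 * v.2 - v.1 * w.2)) := by rw [hdd]; ring
      linarith [hk, key]
    · intro h
      have hv : v.2 ≠ 0 := by intro h0; rw [h0] at h; simp at h
      have hw : w.2 ≠ 0 := by intro h0; rw [h0] at h; simp at h
      refine ⟨hv, hw, (slopeIff w v hw hv).mpr ?_⟩
      have key : v.2 * w.2 * d = -(w.2 * v.2 * (w.1 * v.2 - v.1 * w.2)) := by rw [hdd]; ring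
      linarith [h, key]
  rcases lt_trichotomy (v.2 * w.2 * d) 0 with h | h | h
  · rw [if_pos (show ((v.2 * w.2 * d : ℤ) : ℝ) < 0 by exact_mod_cast h),
      if_pos (hP.mpr h), if_neg (fun hq => by have := hQ.mp hq; omega)]
    norm_num
  · have h0 : ((v.2 * w.2 * d : ℤ) : ℝ) = 0 := by exact_mod_cast h
    rw [if_neg (by rw [h0]; exact lt_irrefl 0), if_neg (by rw [h0]; exact lt_irrefl 0),
      if_neg (fun hp => by have := hP.mp hp; omega),
      if_neg (fun hq => by have := hQ.mp hq; omega)]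
    norm_num
  · rw [if_neg (show ¬((v.2 * w.2 * d : ℤ) : ℝ) < 0 by
        push_neg; exact_mod_cast h.le),
      if_pos (show (0:ℝ) < ((v.2 * w.2 * d : ℤ) : ℝ) by exact_mod_cast h),
      if_neg (fun hp => by have := hP.mp hp; omega), if_pos (hQ.mpr h)]
    norm_num

/-- The signature formula: for `α 0 = (1,0)` and consecutive determinants `±1`,
the sum of the Maslov signatures `μ(α 0, α i, α (i+1))` equals `k₊ - k₋`, where
`k₊` (resp. `k₋`) counts consecutive pairs of slopes that increase (resp.
decrease). -/
theorem signature_eq_kplus_sub_kminus (n : ℕ) (hn : 3 ≤ n) (α : ℕ → ℤ × ℤ)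
    (h1 : α 0 = (1, 0))
    (hdet : ∀ i < n - 1,
      (α i).1 * (α (i + 1)).2 - (α (i + 1)).1 * (α i).2 = 1 ∨
      (α i).1 * (α (i + 1)).2 - (α (i + 1)).1 * (α i).2 = -1) :
    (∑ i ∈ Finset.Ico 1 (n - 1),
        matSignature (maslovMatrix (toR (α 0)) (toR (α i)) (toR (α (i + 1)))))
      = (((Finset.range (n - 1)).filter (fun i => (α i).2 ≠ 0 ∧ (α (i + 1)).2 ≠ 0 ∧
            ((α i).1 : ℚ) / ((α i).2 : ℚ) < ((α (i + 1)).1 : ℚ) / ((α (i + 1)).2 : ℚ))).card : ℤ)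
        - (((Finset.range (n - 1)).filter (fun i => (α i).2 ≠ 0 ∧ (α (i + 1)).2 ≠ 0 ∧
            ((α (i + 1)).1 : ℚ) / ((α (i + 1)).2 : ℚ) < ((α i).1 : ℚ) / ((α i).2 : ℚ))).card : ℤ) := by
  have hn1 : 0 < n - 1 := by omega
  have h02 : (α 0).2 = 0 := by rw [h1]
  have hL : ∀ i ∈ Finset.Ico 1 (n - 1),
      matSignature (maslovMatrix (toR (α 0)) (toR (α i)) (toR (α (i + 1)))) =
        (if (α i).2 ≠ 0 ∧ (α (i + 1)).2 ≠ 0 ∧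
            ((α i).1 : ℚ) / ((α i).2 : ℚ) < ((α (i + 1)).1 : ℚ) / ((α (i + 1)).2 : ℚ)
          then (1:ℤ) else 0)
        - (if (α i).2 ≠ 0 ∧ (α (i + 1)).2 ≠ 0 ∧
            ((α (i + 1)).1 : ℚ) / ((α (i + 1)).2 : ℚ) < ((α i).1 : ℚ) / ((α i).2 : ℚ)
          then (1:ℤ) else 0) := by
    intro i hi
    rw [h1]
    exact perIndex (α i) (α (i + 1)) (hdet i (Finset.mem_Ico.mp hi).2)
  rw [Finset.sum_congr rfl hL, Finset.natCast_card_filter, Finset.natCast_card_filter,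
    Finset.sum_range_eq_add_Ico _ hn1, Finset.sum_range_eq_add_Ico _ hn1,
    if_neg (fun hp => hp.1 h02), if_neg (fun hq => hq.1 h02),
    Finset.sum_sub_distrib]
  ring
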